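/- A rectangular partition (m, m, ..., m) with r rows (r ≥ 1) and m ≥ 1 is a P-position of RIT under normal play if and only if r is even. -/

import Mathlib

/-- The `j`-th part (0-indexed) of a partition given as a list, `0` beyond the end. -/
def part (l : List ℕ) (j : ℕ) : ℕ := l.getD j 0

/-- A partition: a nonincreasing list of positive integers. -/
def IsPartition (l : List ℕ) : Prop :=
  l.Chain' (· ≥ ·) ∧ ∀ x ∈ l, 0 < x

/-- RIT move: replace the part at (0-indexed) position `i` by a smaller value `v`,
keeping the sequence nonincreasing, then drop the (trailing) zeros. -/
def RitMove (l l' : List ℕ) : Prop :=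
  ∃ i v, i < l.length ∧ v < part l i ∧ (l.set i v).Chain' (· ≥ ·) ∧
    l' = (l.set i v).filter (fun x => x ≠ 0)

/-- RIT move on an odd-numbered row (1-indexed), i.e. an even 0-indexed position. -/
def RitMoveOdd (l l' : List ℕ) : Prop :=
  ∃ i v, i < l.length ∧ i % 2 = 0 ∧ v < part l i ∧ (l.set i v).Chain' (· ≥ ·) ∧
    l' = (l.set i v).filter (fun x => x ≠ 0)

/-- RIT move on an even-numbered row (1-indexed), i.e. an odd 0-indexed position. -/
def RitMoveEven (l l' : List ℕ) : Prop :=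
  ∃ i v, i < l.length ∧ i % 2 = 1 ∧ v < part l i ∧ (l.set i v).Chain' (· ≥ ·) ∧
    l' = (l.set i v).filter (fun x => x ≠ 0)

/-- `core λ = (λ₂, λ₂, λ₄, λ₄, …)` (1-indexed parts), as a `0`-padded sequence. -/
def core (l : List ℕ) : ℕ → ℕ := fun j => part l (2 * (j / 2) + 1)

/-- `rem λ = (λ₁ - λ₂, λ₃ - λ₄, …)` (1-indexed parts), as a `0`-padded sequence. -/
def rem (l : List ℕ) : ℕ → ℕ := fun i => part l (2 * i) - part l (2 * i + 1)

/-- A Nim move strictly decreases exactly one coordinate. -/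
def NimMove (p q : ℕ → ℕ) : Prop := ∃ i, q i < p i ∧ ∀ j, j ≠ i → q j = p j

/-- The nim-sum (bitwise XOR) of the remnant of `l`:
`(λ₁ - λ₂) ⊕ (λ₃ - λ₄) ⊕ ⋯ ⊕ (λ_{2⌈r/2⌉-1} - λ_{2⌈r/2⌉})`. -/
def nimSum (l : List ℕ) : ℕ :=
  (List.ofFn (fun i : Fin ((l.length + 1) / 2) => rem l i)).foldr (· ^^^ ·) 0

/-- The minimal excludant of a set of naturals. -/
noncomputable def mexOf (S : Set ℕ) : ℕ := sInf {n | n ∉ S}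

/-- `G` is the (normal play) Sprague-Grundy function of RIT. -/
def IsRitGrundy (G : List ℕ → ℕ) : Prop :=
  ∀ l, IsPartition l → G l = mexOf {n | ∃ l', RitMove l l' ∧ G l' = n}

/-- `G` is the misère Grundy function of RIT (value `1` at the terminal position). -/
def IsRitMisereGrundy (G : List ℕ → ℕ) : Prop :=
  G [] = 1 ∧ ∀ l, IsPartition l → l ≠ [] →
    G l = mexOf {n | ∃ l', RitMove l l' ∧ G l' = n}

/-- `G` is the misère Grundy function of Nim on `0`-padded sequences of heaps. -/
def IsNimMisereGrundy (G : (ℕ → ℕ) → ℕ) : Prop :=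
  (∀ p : ℕ → ℕ, (∀ i, p i = 0) → G p = 1) ∧
  (∀ p : ℕ → ℕ, (Function.support p).Finite → (∃ i, p i ≠ 0) →
    G p = mexOf {n | ∃ q, NimMove p q ∧ G q = n})

/-- `P` is the set of P-positions of RIT under normal play. -/
def IsRitP (P : List ℕ → Prop) : Prop :=
  ∀ l, IsPartition l → (P l ↔ ∀ l', RitMove l l' → ¬ P l')

namespace Rit

lemma part_set {l : List ℕ} {i v j : ℕ} (h : i < l.length) :
    part (l.set i v) j = if j = i then v else part l j := by
  unfold part
  rcases eq_or_ne j i with rfl | hne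
  · rw [List.getD_eq_getElem _ _ (by simpa using h)]
    simp [List.getElem_set_self (by simpa using h)]
  · rcases lt_or_ge j l.length with hj | hj
    · rw [List.getD_eq_getElem _ _ (by simpa using hj), List.getD_eq_getElem _ _ hj,
        List.getElem_set_of_ne (Ne.symm hne)]
      simp [hne]
    · rw [List.getD_eq_default _ _ (by simpa using hj), List.getD_eq_default _ _ hj]
      simp [hne]

lemma part_eq_zero {l : List ℕ} {j : ℕ} (h : l.length ≤ j) : part l j = 0 :=
  List.getD_eq_default _ _ h

lemma lt_length_of_part_pos {l : List ℕ} {j : ℕ} (h : 0 < part l j) : j < l.length := by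
  by_contra hc; rw [part_eq_zero (by omega)] at h; omega

lemma part_anti {l : List ℕ} (hl : l.Chain' (· ≥ ·)) {j k : ℕ} (h : j ≤ k) :
    part l k ≤ part l j := by
  rcases lt_or_ge k l.length with hk | hk
  · have hj : j < l.length := lt_of_le_of_lt h hk
    rcases eq_or_lt_of_le h with rfl | hlt
    · exact le_refl _
    · have := (List.pairwise_iff_get.1 (List.isChain_iff_pairwise.1 hl)) ⟨j, hj⟩ ⟨k, hk⟩ hlt
      rw [part, part, List.getD_eq_getElem _ _ hj, List.getD_eq_getElem _ _ hk]
      exact this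
  · rw [part_eq_zero hk]; exact Nat.zero_le _

lemma part_filter {l : List ℕ} (hl : l.Chain' (· ≥ ·)) (j : ℕ) :
    part (l.filter (fun x => x ≠ 0)) j = part l j := by
  induction l generalizing j with
  | nil => rfl
  | cons a t ih =>
    have ht : t.Chain' (· ≥ ·) := hl.tail
    have hall : ∀ x ∈ t, a ≥ x := by
      intro x hx
      exact List.rel_of_pairwise_cons (List.isChain_iff_pairwise.1 hl) hx
    by_cases ha : a = 0
    · subst ha
      have hz : ∀ x ∈ (0 : ℕ) :: t, x = 0 := by
        intro x hx
        rcases List.mem_cons.1 hx with rfl | hx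
        · rfl
        · exact Nat.le_zero.1 (hall x hx)
      have : ((0 : ℕ) :: t).filter (fun x => x ≠ 0) = [] := by
        rw [List.filter_eq_nil_iff]
        intro x hx; simpa using hz x hx
      rw [this]
      show (0 : ℕ) = part (0 :: t) j
      rcases lt_or_ge j (0 :: t).length with hj | hj
      · rw [part, List.getD_eq_getElem _ _ hj]
        exact (hz _ (List.getElem_mem hj)).symm
      · rw [part_eq_zero hj]
    · have : ((a : ℕ) :: t).filter (fun x => x ≠ 0) = a :: t.filter (fun x => x ≠ 0) := by
        simp [List.filter_cons, ha]
      rw [this]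
      cases j with
      | zero => rfl
      | succ j => exact ih ht j

lemma sum_filter_ne_zero (l : List ℕ) : (l.filter (fun x => x ≠ 0)).sum = l.sum := by
  induction l with
  | nil => rfl
  | cons a t ih =>
    by_cases ha : a = 0 <;>
      simp only [List.filter_cons, ha] <;> simp_all <;> omega

lemma sum_set_lt : ∀ (l : List ℕ) (i v : ℕ), i < l.length → v < part l i →
    (l.set i v).sum < l.sum := by
  intro l
  induction l with
  | nil => intro i v h; simp at h
  | cons a t ih =>
    intro i v hi hv
    cases i with
    | zero => simp only [List.set_cons_zero, List.sum_cons]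
              have : v < a := hv
              omega
    | succ i =>
        simp only [List.set_cons_succ, List.sum_cons]
        have := ih i v (by simpa using hi) hv
        omega

lemma chain'_set {l : List ℕ} (hl : l.Chain' (· ≥ ·)) {i v : ℕ} (hi : i < l.length)
    (h1 : part l (i + 1) ≤ v) (h2 : v < part l i) :
    (l.set i v).Chain' (· ≥ ·) := by
  change List.IsChain _ _ at hl ⊢
  rw [List.isChain_iff_getElem] at hl ⊢
  intro j hj
  simp only [List.length_set] at hj
  simp only [List.get_eq_getElem, List.getElem_set]
  have hjl : j < l.length := by omega
  have hj1 : j + 1 < l.length := by omega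
  have hpart : ∀ k (hk : k < l.length), part l k = l[k] := fun k hk =>
    List.getD_eq_getElem _ _ hk
  by_cases e1 : i = j
  · subst e1
    by_cases e2 : i = i + 1
    · omega
    · simp only [if_pos rfl, if_neg e2]
      have : part l (i+1) = l[i+1] := hpart _ hj1
      show l[i+1] ≤ v
      omega
  · by_cases e2 : i = j + 1
    · subst e2
      simp only [if_neg e1, if_pos rfl]
      have hch := hl j (by omega)
      have : part l (j+1) = l[j+1] := hpart _ hj1
      show v ≤ l[j]
      omega
    · simp only [if_neg e1, if_neg e2]
      have hch := hl j (by omega)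
      simpa using hch

/-- Everything we need to know about the result of a move. -/
lemma move_spec {l : List ℕ} (hl : IsPartition l) {i v : ℕ} (hi : i < l.length)
    (h1 : part l (i + 1) ≤ v) (h2 : v < part l i) :
    IsPartition ((l.set i v).filter (fun x => x ≠ 0)) ∧
    ((l.set i v).filter (fun x => x ≠ 0)).sum < l.sum ∧
    ((l.set i v).filter (fun x => x ≠ 0)).length ≤ l.length ∧
    (∀ j, part ((l.set i v).filter (fun x => x ≠ 0)) j = if j = i then v else part l j) := by
  have hchain := chain'_set hl.1 hi h1 h2
  refine ⟨⟨hchain.sublist List.filter_sublist, ?_⟩, ?_, ?_, ?_⟩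
  · intro x hx
    have := (List.mem_filter.1 hx).2
    simp only [ne_eq, decide_not, Bool.not_eq_true', decide_eq_false_iff_not] at this
    omega
  · rw [sum_filter_ne_zero]
    exact sum_set_lt l i v hi h2
  · calc ((l.set i v).filter (fun x => x ≠ 0)).length ≤ (l.set i v).length :=
        List.filter_sublist.length_le
      _ = l.length := List.length_set ..
  · intro j
    rw [part_filter hchain, part_set hi]

lemma move_elim {l l' : List ℕ} (h : RitMove l l') :
    ∃ i v, i < l.length ∧ part l (i + 1) ≤ v ∧ v < part l i ∧
      l' = (l.set i v).filter (fun x => x ≠ 0) := by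
  obtain ⟨i, v, hi, hv, hchain, heq⟩ := h
  refine ⟨i, v, hi, ?_, hv, heq⟩
  have := part_anti hchain (Nat.le_succ i)
  rwa [part_set hi, part_set hi, if_pos rfl, if_neg (by omega)] at this

end Rit
namespace Rit

lemma xor_lcomm (a b c : ℕ) : a ^^^ (b ^^^ c) = b ^^^ (a ^^^ c) := by
  rw [← Nat.xor_assoc, Nat.xor_comm a b, Nat.xor_assoc]

def foldXor (N : ℕ) (f : ℕ → ℕ) : ℕ :=
  (List.ofFn (fun i : Fin N => f i)).foldr (· ^^^ ·) 0

lemma foldXor_succ (N : ℕ) (f : ℕ → ℕ) :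
    foldXor (N + 1) f = f 0 ^^^ foldXor N (fun k => f (k + 1)) := by
  simp [foldXor, List.ofFn_succ]

lemma foldXor_congr {N : ℕ} {f g : ℕ → ℕ} (h : ∀ k < N, f k = g k) :
    foldXor N f = foldXor N g := by
  induction N generalizing f g with
  | zero => rfl
  | succ N ih =>
    rw [foldXor_succ, foldXor_succ, h 0 (by omega),
      ih (fun k hk => h (k + 1) (by omega))]

lemma foldXor_update {N k : ℕ} {f g : ℕ → ℕ} (hk : k < N)
    (h : ∀ j < N, j ≠ k → g j = f j) :
    foldXor N g = foldXor N f ^^^ f k ^^^ g k := by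
  induction N generalizing f g k with
  | zero => omega
  | succ N ih =>
    rw [foldXor_succ, foldXor_succ]
    cases k with
    | zero =>
      rw [foldXor_congr (f := fun j => g (j+1)) (g := fun j => f (j+1))
        (fun j hj => h (j+1) (by omega) (by omega))]
      simp [Nat.xor_assoc, Nat.xor_comm, xor_lcomm, Nat.xor_xor_cancel_left, Nat.xor_self]
    | succ k =>
      rw [ih (k := k) (by omega) (fun j hj hne => h (j+1) (by omega) (by omega)),
        h 0 (by omega) (by omega)]
      simp [Nat.xor_assoc, Nat.xor_comm, xor_lcomm, Nat.xor_xor_cancel_left, Nat.xor_self]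

lemma foldXor_zero {N : ℕ} {f : ℕ → ℕ} (h : ∀ k < N, f k = 0) : foldXor N f = 0 := by
  induction N generalizing f with
  | zero => rfl
  | succ N ih =>
    rw [foldXor_succ, h 0 (by omega), ih (fun k hk => h (k+1) (by omega))]
    rfl

lemma foldXor_snoc (N : ℕ) (f : ℕ → ℕ) :
    foldXor (N + 1) f = foldXor N f ^^^ f N := by
  induction N generalizing f with
  | zero => simp [foldXor]
  | succ N ih =>
    rw [foldXor_succ, ih, foldXor_succ (f := f)]
    simp [Nat.xor_assoc]

lemma foldXor_extend {M N : ℕ} {f : ℕ → ℕ} (hMN : M ≤ N) (h : ∀ k, M ≤ k → f k = 0) :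
    foldXor N f = foldXor M f := by
  induction N with
  | zero => have : M = 0 := by omega
            subst this; rfl
  | succ N ih =>
    rcases eq_or_lt_of_le hMN with rfl | hlt
    · rfl
    · rw [foldXor_snoc, ih (by omega), h N (by omega), Nat.xor_zero]

lemma testBit_foldXor_false {N : ℕ} {f : ℕ → ℕ} {i : ℕ}
    (h : ∀ k < N, (f k).testBit i = false) : (foldXor N f).testBit i = false := by
  induction N generalizing f with
  | zero => simp [foldXor]
  | succ N ih =>
    rw [foldXor_succ, Nat.testBit_xor, h 0 (by omega),
      ih (fun k hk => h (k+1) (by omega))]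
    rfl

lemma foldXor_exists_lt {N : ℕ} {f : ℕ → ℕ} (h : foldXor N f ≠ 0) :
    ∃ k < N, f k ^^^ foldXor N f < f k := by
  set s := foldXor N f with hs
  obtain ⟨i, hi, hi'⟩ := Nat.exists_most_significant_bit h
  have : ∃ k < N, (f k).testBit i = true := by
    by_contra hc
    push_neg at hc
    have := testBit_foldXor_false (f := f) (N := N) (i := i)
      (fun k hk => by simpa using hc k hk)
    rw [← hs] at this
    rw [this] at hi; exact Bool.false_ne_true hi
  obtain ⟨k, hkN, hk⟩ := this
  refine ⟨k, hkN, Nat.lt_of_testBit i ?_ hk ?_⟩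
  · rw [Nat.testBit_xor, hk, hi]; rfl
  · intro j hj
    rw [Nat.testBit_xor, hi' j hj, Bool.xor_false]

end Rit
section
variable {P : List ℕ → Prop}
open Rit in
lemma nimSum_eq_foldXor {l : List ℕ} {N : ℕ} (h : (l.length + 1) / 2 ≤ N) :
    nimSum l = foldXor N (rem l) := by
  have hz : ∀ k, (l.length + 1) / 2 ≤ k → rem l k = 0 := by
    intro k hk
    have h0 : part l (2 * k) = 0 := part_eq_zero (by omega)
    simp [rem, h0]
  rw [foldXor_extend h hz]
  rfl

open Rit in
lemma key (hP : IsRitP P) :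
    ∀ n l, l.sum ≤ n → IsPartition l → (P l ↔ nimSum l = 0) := by
  intro n
  induction n with
  | zero =>
    intro l hs hl
    have hnil : l = [] := by
      cases l with
      | nil => rfl
      | cons a t =>
        have := hl.2 a (List.mem_cons_self ..)
        simp [List.sum_cons] at hs; omega
    subst hnil
    have h0 : nimSum [] = 0 := rfl
    rw [h0, (hP [] hl)]
    constructor
    · intro _; rfl
    · intro _ l' hmove
      obtain ⟨i, v, hi, _⟩ := hmove
      simp at hi
  | succ n ih =>
    intro l hs hl
    rw [hP l hl]
    constructor
    · -- (∀ moves lead to non-P) → nimSum = 0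
      intro hmoves
      by_contra hne
      obtain ⟨k, hkN, hklt⟩ := foldXor_exists_lt (N := (l.length + 1) / 2) (f := rem l)
        (by rw [← nimSum_eq_foldXor (le_refl _)]; exact hne)
      rw [← nimSum_eq_foldXor (le_refl _)] at hklt
      have hsubeq : rem l k = part l (2*k) - part l (2*k+1) := rfl
      have hrem : 0 < rem l k := by omega
      have hq : part l (2*k+1) ≤ part l (2*k) := part_anti hl.1 (by omega)
      have hppos : 0 < part l (2*k) := by omega
      have hi : 2*k < l.length := lt_length_of_part_pos hppos
      have h2 : part l (2*k+1) + (rem l k ^^^ nimSum l) < part l (2*k) := by omega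
      have h1 : part l (2*k+1) ≤ part l (2*k+1) + (rem l k ^^^ nimSum l) := by omega
      obtain ⟨hl', hsum', hlen', hpart'⟩ := move_spec hl hi h1 h2
      set v := part l (2*k+1) + (rem l k ^^^ nimSum l) with hv
      set l' := (l.set (2*k) v).filter (fun x => x ≠ 0) with hl'def
      have hmove : RitMove l l' := ⟨2*k, v, hi, h2, chain'_set hl.1 hi h1 h2, rfl⟩
      have hremj : ∀ j < (l.length + 1) / 2, j ≠ k → rem l' j = rem l j := by
        intro j hj hjk
        simp only [rem]
        rw [hpart' (2*j), hpart' (2*j+1), if_neg (by omega), if_neg (by omega)]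
      have hremk : rem l' k = rem l k ^^^ nimSum l := by
        have e1 : part l' (2*k) = v := by rw [hpart' _]; exact if_pos rfl
        have e2 : part l' (2*k+1) = part l (2*k+1) := by
          rw [hpart' _]; exact if_neg (by omega)
        show part l' (2*k) - part l' (2*k+1) = rem l k ^^^ nimSum l
        rw [e1, e2, hv]
        omega
      have hnim' : nimSum l' = 0 := by
        rw [nimSum_eq_foldXor (N := (l.length + 1) / 2) (by omega),
          foldXor_update hkN (f := rem l) hremj, ← nimSum_eq_foldXor (le_refl _), hremk]
        simp [Nat.xor_assoc, Nat.xor_comm, xor_lcomm, Nat.xor_xor_cancel_left, Nat.xor_self]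
      have := ih l' (by omega) hl'
      exact hmoves l' hmove (this.2 hnim')
    · intro h0 l' hmove
      obtain ⟨i, v, hi, h1, h2, heq⟩ := move_elim hmove
      obtain ⟨hl', hsum', hlen', hpart'⟩ := move_spec hl hi h1 h2
      rw [← heq] at hl' hsum' hlen' hpart'
      have hkN : i / 2 < (l.length + 1) / 2 := by omega
      have hremj : ∀ j < (l.length + 1) / 2, j ≠ i / 2 → rem l' j = rem l j := by
        intro j hj hjk
        simp only [rem]
        rw [hpart' (2*j), hpart' (2*j+1), if_neg (by omega), if_neg (by omega)]
      have hremk : rem l' (i / 2) ≠ rem l (i / 2) := by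
        have hi2 : i = 2 * (i / 2) ∨ i = 2 * (i / 2) + 1 := by omega
        rcases hi2 with hi2 | hi2
        · have e1 : part l' (2 * (i / 2)) = v := by
            rw [hpart' _, if_pos (by omega)]
          have e2 : part l' (2 * (i / 2) + 1) = part l (2 * (i / 2) + 1) := by
            rw [hpart' _, if_neg (by omega)]
          have e3 : part l (i + 1) = part l (2 * (i / 2) + 1) := by rw [← hi2]
          simp only [rem, e1, e2]
          rw [← hi2]
          omega
        · have e1 : part l' (2 * (i / 2)) = part l (2 * (i / 2)) := by
            rw [hpart' _, if_neg (by omega)]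
          have e2 : part l' (2 * (i / 2) + 1) = v := by
            rw [hpart' _, if_pos (by omega)]
          have e4 : part l (2 * (i / 2) + 1) ≤ part l (2 * (i / 2)) := part_anti hl.1 (by omega)
          have e5 : v < part l (2 * (i / 2) + 1) := by rw [← hi2]; exact h2
          simp only [rem, e1, e2]
          omega
      have hnim' : nimSum l' ≠ 0 := by
        rw [nimSum_eq_foldXor (N := (l.length + 1) / 2) (by omega),
          foldXor_update hkN (f := rem l) hremj, ← nimSum_eq_foldXor (le_refl _), h0,
          Nat.zero_xor]
        exact Nat.xor_ne_zero_iff.2 (Ne.symm hremk)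
      have := ih l' (by omega) hl'
      intro hPl'
      exact hnim' (this.1 hPl')
end


open Rit

/-- a rectangular partition with `r ≥ 1` rows of size `m ≥ 1` is a
P-position of RIT under normal play iff `r` is even. -/
theorem stmt_12 (P : List ℕ → Prop) (hP : IsRitP P) (r m : ℕ)
    (hr : 1 ≤ r) (hm : 1 ≤ m) :
    P (List.replicate r m) ↔ Even r := by
  have hpartl : IsPartition (List.replicate r m) := by
    constructor
    · exact List.isChain_replicate_of_rel r (le_refl m)
    · intro x hx
      rw [List.eq_of_mem_replicate hx]; omega
  have hpartval : ∀ j, part (List.replicate r m) j = if j < r then m else 0 := by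
    intro j
    by_cases hj : j < r
    · rw [part, List.getD_eq_getElem _ _ (by simpa using hj), List.getElem_replicate,
        if_pos hj]
    · rw [part_eq_zero (by simpa using hj), if_neg hj]
  have hremval : ∀ k, rem (List.replicate r m) k =
      if 2 * k < r ∧ ¬ (2 * k + 1 < r) then m else 0 := by
    intro k
    simp only [rem, hpartval]
    by_cases a : 2 * k < r <;> by_cases b : 2 * k + 1 < r <;> simp [a, b] <;> omega
  rw [key hP (List.replicate r m).sum _ le_rfl hpartl]
  rcases Nat.even_or_odd r with he | ho
  · have : nimSum (List.replicate r m) = 0 := by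
      rw [nimSum_eq_foldXor (le_refl _)]
      apply foldXor_zero
      intro k hk
      rw [hremval k, if_neg]
      rcases he with ⟨a, ha⟩
      omega
    simp [this, he]
  · have hodd : ¬ Even r := Nat.not_even_iff_odd.mpr ho
    rcases ho with ⟨a, ha⟩
    have hlen : ((List.replicate r m).length + 1) / 2 = a + 1 := by
      rw [List.length_replicate]; omega
    have : nimSum (List.replicate r m) = m := by
      rw [nimSum_eq_foldXor (le_refl _), hlen,
        foldXor_update (k := a) (f := fun _ => 0) (by omega)
          (by intro j hj hja; rw [hremval j, if_neg (by omega)]),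
        foldXor_zero (fun _ _ => rfl), hremval a, if_pos (by omega)]
      simp
    rw [this]
    constructor
    · intro h; exact absurd h (by omega : m ≠ 0)
    · intro h; exact absurd h hodd
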